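/- Let Δx > 0, s > 0 and set η = s·Δx². Let the centers be x₀ = 0, x₁ = Δx, x₂ = 2Δx and let a, b ∈ ℝ. If λ₁, λ₂, λ₃ ∈ ℝ satisfy the three interpolation conditions P(x₀) = −Δx·a, P(x₁) = 0, P(x₂) = Δx·b, where P(x) = λ₁·√(1 + s·(x − x₀)²) + λ₂·√(1 + s·(x − x₁)²) + λ₃·√(1 + s·(x − x₂)²), then the derivative of P at x₁ is P'(x₁) = ((√(4η + 1) + 1)/(4·√(η + 1)))·(a + b). -/

import Mathlib

lemma mq_hasDerivAt (s c x : ℝ) (hs : 0 < s) :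
    HasDerivAt (fun y => Real.sqrt (1 + s * (y - c) ^ 2))
      (s * (x - c) / Real.sqrt (1 + s * (x - c) ^ 2)) x := by
  have hpos : 0 < 1 + s * (x - c) ^ 2 := by positivity
  have h1 : HasDerivAt (fun y => 1 + s * (y - c) ^ 2) (s * (2 * (x - c))) x := by
    have hid : HasDerivAt (fun y : ℝ => y - c) 1 x := (hasDerivAt_id x).sub_const c
    have := hid.pow 2
    have h2 := this.const_mul s
    have h3 := h2.const_add 1
    refine h3.congr_deriv ?_
    ring
  have h2 := (Real.hasDerivAt_sqrt (ne_of_gt hpos)).comp x h1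
  refine h2.congr_deriv ?_
  have hsq : Real.sqrt (1 + s * (x - c) ^ 2) ≠ 0 :=
    ne_of_gt (Real.sqrt_pos.mpr hpos)
  field_simp

/-- The derivative at the middle node of the three-point MQ interpolant of the
primitive values `(−Δx·a, 0, Δx·b)` equals the exact k = 2 coefficient times `a + b`. -/
theorem stmt_4 (Δx s : ℝ) (hΔ : 0 < Δx) (hs : 0 < s) (a b l1 l2 l3 : ℝ)
    (P : ℝ → ℝ)
    (hP : P = fun x => l1 * Real.sqrt (1 + s * (x - 0) ^ 2)
        + l2 * Real.sqrt (1 + s * (x - Δx) ^ 2)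
        + l3 * Real.sqrt (1 + s * (x - 2 * Δx) ^ 2))
    (h0 : P 0 = -Δx * a) (h1 : P Δx = 0) (h2 : P (2 * Δx) = Δx * b) :
    deriv P Δx
      = ((Real.sqrt (4 * (s * Δx ^ 2) + 1) + 1) / (4 * Real.sqrt (s * Δx ^ 2 + 1)))
        * (a + b) := by
  set η := s * Δx ^ 2 with hη
  have hηpos : 0 < η := by positivity
  set A := Real.sqrt (η + 1) with hA
  set B := Real.sqrt (4 * η + 1) with hB
  have hApos : 0 < A := Real.sqrt_pos.mpr (by linarith)
  have hBpos : 0 < B := Real.sqrt_pos.mpr (by linarith)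
  have hA2 : A ^ 2 = η + 1 := Real.sq_sqrt (by linarith)
  have hB2 : B ^ 2 = 4 * η + 1 := Real.sq_sqrt (by linarith)
  have hB1 : 1 < B := by
    nlinarith [hB2, hBpos]
  -- rewrite interpolation conditions
  have e00 : (1 : ℝ) + s * ((0:ℝ) - 0) ^ 2 = 1 := by ring
  have e01 : (1 : ℝ) + s * ((0:ℝ) - Δx) ^ 2 = η + 1 := by rw [hη]; ring
  have e02 : (1 : ℝ) + s * ((0:ℝ) - 2 * Δx) ^ 2 = 4 * η + 1 := by rw [hη]; ring
  have e10 : (1 : ℝ) + s * (Δx - 0) ^ 2 = η + 1 := by rw [hη]; ring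
  have e11 : (1 : ℝ) + s * (Δx - Δx) ^ 2 = 1 := by ring
  have e12 : (1 : ℝ) + s * (Δx - 2 * Δx) ^ 2 = η + 1 := by rw [hη]; ring
  have e20 : (1 : ℝ) + s * (2 * Δx - 0) ^ 2 = 4 * η + 1 := by rw [hη]; ring
  have e21 : (1 : ℝ) + s * (2 * Δx - Δx) ^ 2 = η + 1 := by rw [hη]; ring
  have e22 : (1 : ℝ) + s * (2 * Δx - 2 * Δx) ^ 2 = 1 := by ring
  rw [hP] at h0 h2
  simp only [e00, e01, e02, e20, e21, e22, Real.sqrt_one, ← hA, ← hB] at h0 h2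
  -- key linear relation
  have key : (l1 - l3) * (B - 1) = Δx * (a + b) := by linear_combination h2 - h0
  -- compute the derivative
  have hd : HasDerivAt P ((l1 * (s * (Δx - 0) / Real.sqrt (1 + s * (Δx - 0) ^ 2))
      + l2 * (s * (Δx - Δx) / Real.sqrt (1 + s * (Δx - Δx) ^ 2)))
      + l3 * (s * (Δx - 2 * Δx) / Real.sqrt (1 + s * (Δx - 2 * Δx) ^ 2))) Δx := by
    rw [hP]
    exact (((mq_hasDerivAt s 0 Δx hs).const_mul l1).add
      ((mq_hasDerivAt s Δx Δx hs).const_mul l2)).add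
        ((mq_hasDerivAt s (2 * Δx) Δx hs).const_mul l3)
  rw [hd.deriv]
  simp only [e10, e11, e12, ← hA, Real.sqrt_one]
  have hAne : A ≠ 0 := ne_of_gt hApos
  have hBne : B - 1 ≠ 0 := by linarith
  have key3 : (l1 - l3) * (4 * η) = Δx * (a + b) * (B + 1) := by
    linear_combination (B + 1) * key - (l1 - l3) * hB2
  have hΔne : Δx ≠ 0 := ne_of_gt hΔ
  have key4 : (l1 - l3) * (4 * (s * Δx)) = (a + b) * (B + 1) := by
    have hx : Δx * ((l1 - l3) * (4 * (s * Δx))) = Δx * ((a + b) * (B + 1)) := by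
      linear_combination key3 - 4 * (l1 - l3) * hη
    exact mul_left_cancel₀ hΔne hx
  field_simp
  linear_combination key4
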